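/- Let 0 < p ≤ 1 and let A₁, A₂, B₁, B₂ be positive definite n×n matrices. Set αⱼ to be the smallest eigenvalue of (Aⱼ^{p/2} Bⱼ^{q} Aⱼ^{p/2})^{1/(p+q)} for j = 1,2 with 0 < q ≤ 1. If Bⱼ^q ≥ αⱼ^{p+q} Aⱼ^{-p} for j = 1,2, then ((B₁+B₂)/2)^q ≥ ((α₁+α₂)/2)^{p+q} · ((A₁+A₂)/2)^{-p} in the Loewner order. -/

import Mathlib

open Matrix
open scoped ComplexOrder

/-- Real power of a Hermitian matrix via the spectral theorem (junk value `0` on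
non-Hermitian input). -/
noncomputable def mpow {n : Type*} [Fintype n] [DecidableEq n] (A : Matrix n n ℂ) (p : ℝ) :
    Matrix n n ℂ :=
  if hA : A.IsHermitian then
    (hA.eigenvectorUnitary : Matrix n n ℂ) *
      Matrix.diagonal (fun i => ((hA.eigenvalues i ^ p : ℝ) : ℂ)) *
      star (hA.eigenvectorUnitary : Matrix n n ℂ)
  else 0

/-- Loewner order: `loewner A B` iff `B - A` is positive semidefinite. -/
def loewner {n : Type*} [Fintype n] (A B : Matrix n n ℂ) : Prop := (B - A).PosSemidef

/-- Smallest eigenvalue of a Hermitian matrix (junk value `0` on non-Hermitian input). -/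
noncomputable def lambdaMin {n : Type*} [Fintype n] [DecidableEq n] (A : Matrix n n ℂ) : ℝ :=
  if hA : A.IsHermitian then ⨅ i, hA.eigenvalues i else 0

/-- Largest eigenvalue of a Hermitian matrix; for positive definite `A` this is the
operator norm `‖A‖∞` (junk value `0` on non-Hermitian input). -/
noncomputable def lambdaMax {n : Type*} [Fintype n] [DecidableEq n] (A : Matrix n n ℂ) : ℝ :=
  if hA : A.IsHermitian then ⨆ i, hA.eigenvalues i else 0

/-- The `j`-th smallest eigenvalue (counted with multiplicity, increasing order)
of a Hermitian matrix. -/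
noncomputable def eigUp {k : ℕ} (A : Matrix (Fin k) (Fin k) ℂ) (j : Fin k) : ℝ :=
  if hA : A.IsHermitian then (hA.eigenvalues ∘ Tuple.sort hA.eigenvalues) j else 0

/-- The `j`-th largest eigenvalue of a Hermitian matrix. -/
noncomputable def eigDown {k : ℕ} (A : Matrix (Fin k) (Fin k) ℂ) (j : Fin k) : ℝ :=
  eigUp A j.rev

set_option linter.unusedSectionVars false
set_option maxHeartbeats 1000000

namespace Aux

variable {n : Type*} [Fintype n] [DecidableEq n] {A B C X Y : Matrix n n ℂ}

/-- `cfc` with the predicate pinned to `Matrix.IsHermitian`, to avoid instance mismatches. -/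
noncomputable def cfcH {n : Type*} [Fintype n] [DecidableEq n] (f : ℝ → ℝ)
    (A : Matrix n n ℂ) : Matrix n n ℂ :=
  cfc (R := ℝ) (p := IsSelfAdjoint) f A

lemma contOnFinite {S : Set ℝ} (hS : S.Finite) (f : ℝ → ℝ) : ContinuousOn f S := by
  rw [continuousOn_iff_continuous_restrict]
  haveI := hS.to_subtype
  exact continuous_of_discreteTopology

lemma contOnSpec (A : Matrix n n ℂ) (f : ℝ → ℝ) : ContinuousOn f (spectrum ℝ A) :=
  contOnFinite A.finite_real_spectrum f

-- wrappers with pinned instances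
lemma cfcH_isHermitian (f : ℝ → ℝ) (A : Matrix n n ℂ) : (cfcH f A).IsHermitian :=
  cfc_predicate (p := IsSelfAdjoint) f A

lemma cfcH_mul (f g : ℝ → ℝ) (A : Matrix n n ℂ) :
    cfcH (fun t => f t * g t) A = cfcH f A * cfcH g A :=
  cfc_mul (p := IsSelfAdjoint) f g A (contOnSpec A f) (contOnSpec A g)

lemma cfcH_add (f g : ℝ → ℝ) (A : Matrix n n ℂ) :
    cfcH (fun t => f t + g t) A = cfcH f A + cfcH g A :=
  cfc_add (p := IsSelfAdjoint) (a := A) f g (contOnSpec A f) (contOnSpec A g)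

lemma cfcH_sub (f g : ℝ → ℝ) (A : Matrix n n ℂ) :
    cfcH (fun t => f t - g t) A = cfcH f A - cfcH g A :=
  cfc_sub (p := IsSelfAdjoint) f g A (contOnSpec A f) (contOnSpec A g)

lemma cfcH_congr {f g : ℝ → ℝ} {A : Matrix n n ℂ} (h : (spectrum ℝ A).EqOn f g) :
    cfcH f A = cfcH g A :=
  cfc_congr (p := IsSelfAdjoint) h

lemma cfcH_id (hA : A.IsHermitian) : cfcH (fun t => t) A = A :=
  cfc_id' (p := IsSelfAdjoint) ℝ A hA

lemma cfcH_one (hA : A.IsHermitian) : cfcH (fun _ => (1:ℝ)) A = 1 :=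
  cfc_const_one (p := IsSelfAdjoint) ℝ A hA

lemma cfcH_const_mul (r : ℝ) (f : ℝ → ℝ) (A : Matrix n n ℂ) :
    cfcH (fun t => r * f t) A = r • cfcH f A :=
  cfc_const_mul (p := IsSelfAdjoint) r f A (contOnSpec A f)

lemma cfcH_const (r : ℝ) (hA : A.IsHermitian) : cfcH (fun _ => r) A = r • (1 : Matrix n n ℂ) := by
  have h : cfcH (fun _ => r) A = cfcH (fun t => r * 1) A := by norm_num
  rw [h, cfcH_const_mul r (fun _ => (1:ℝ)) A, cfcH_one hA]

lemma dot_unitary (U : Matrix n n ℂ) (x : n → ℂ) (z : n → ℂ) :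
    star x ⬝ᵥ (U *ᵥ z) = star (star U *ᵥ x) ⬝ᵥ z := by
  rw [dotProduct_mulVec, star_mulVec, star_eq_conjTranspose, conjTranspose_conjTranspose]

lemma qf_cfcH (hA : A.IsHermitian) (f : ℝ → ℝ) (x : n → ℂ) :
    star x ⬝ᵥ (cfcH f A) *ᵥ x =
      ((∑ i, f (hA.eigenvalues i) * ‖(star (hA.eigenvectorUnitary : Matrix n n ℂ) *ᵥ x) i‖^2 : ℝ) : ℂ) := by
  rw [cfcH, hA.cfc_eq, Matrix.IsHermitian.cfc, Unitary.conjStarAlgAut_apply]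
  set U : Matrix n n ℂ := (hA.eigenvectorUnitary : Matrix n n ℂ) with hU
  set c : n → ℂ := star U *ᵥ x with hc
  have h1 : (U * Matrix.diagonal (RCLike.ofReal ∘ f ∘ hA.eigenvalues) * star U) *ᵥ x
      = U *ᵥ (Matrix.diagonal (RCLike.ofReal ∘ f ∘ hA.eigenvalues) *ᵥ c) := by
    simp [hc, mulVec_mulVec, Matrix.mul_assoc]
  rw [h1, dot_unitary, ← hc]
  have h2 : ∀ i, star c i * (Matrix.diagonal (RCLike.ofReal ∘ f ∘ hA.eigenvalues) *ᵥ c) i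
      = ((f (hA.eigenvalues i) * ‖c i‖^2 : ℝ) : ℂ) := by
    intro i
    rw [mulVec_diagonal]
    simp only [Function.comp_apply, Pi.star_apply]
    rw [mul_left_comm, RCLike.star_def, RCLike.conj_mul]
    norm_cast
  rw [dotProduct, Complex.ofReal_sum]
  exact Finset.sum_congr rfl fun i _ => h2 i

lemma unitary_cancel (hA : A.IsHermitian) (x : n → ℂ) :
    star (hA.eigenvectorUnitary : Matrix n n ℂ) *ᵥ
      ((hA.eigenvectorUnitary : Matrix n n ℂ) *ᵥ x) = x := by
  rw [mulVec_mulVec, Unitary.star_mul_self_of_mem (SetLike.coe_mem _), one_mulVec]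

lemma unitary_cancel' (hA : A.IsHermitian) (x : n → ℂ) :
    (hA.eigenvectorUnitary : Matrix n n ℂ) *ᵥ
      (star (hA.eigenvectorUnitary : Matrix n n ℂ) *ᵥ x) = x := by
  rw [mulVec_mulVec, Unitary.mul_star_self_of_mem (SetLike.coe_mem _), one_mulVec]

lemma cfcH_posSemidef (hA : A.IsHermitian) {f : ℝ → ℝ}
    (hf : ∀ i, 0 ≤ f (hA.eigenvalues i)) : (cfcH f A).PosSemidef := by
  rw [cfcH, hA.cfc_eq, Matrix.IsHermitian.cfc, Unitary.conjStarAlgAut_apply]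
  rw [show star (hA.eigenvectorUnitary : Matrix n n ℂ)
      = (hA.eigenvectorUnitary : Matrix n n ℂ)ᴴ from rfl]
  refine Matrix.PosSemidef.mul_mul_conjTranspose_same ?_ _
  refine Matrix.PosSemidef.diagonal fun i => ?_
  simpa using Complex.zero_le_real.mpr (hf i)

lemma cfcH_posDef (hA : A.IsHermitian) {f : ℝ → ℝ}
    (hf : ∀ i, 0 < f (hA.eigenvalues i)) : (cfcH f A).PosDef := by
  refine Matrix.PosDef.of_dotProduct_mulVec_pos (cfcH_isHermitian f A) fun x hx => ?_
  rw [qf_cfcH hA]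
  set c := star (hA.eigenvectorUnitary : Matrix n n ℂ) *ᵥ x with hc
  have hcne : c ≠ 0 := by
    intro h
    apply hx
    have h2 := unitary_cancel' hA x
    rw [← hc, h, mulVec_zero] at h2
    exact h2.symm
  obtain ⟨i₀, hi₀⟩ := Function.ne_iff.mp hcne
  refine Complex.zero_lt_real.mpr ?_
  refine Finset.sum_pos' (fun i _ => mul_nonneg (hf i).le (sq_nonneg _)) ⟨i₀, Finset.mem_univ _, ?_⟩
  have : 0 < ‖c i₀‖ ^ 2 := pow_pos (norm_pos_iff.mpr (by simpa using hi₀)) 2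
  exact mul_pos (hf i₀) this

lemma eig_nonneg_of_psd (hA : A.IsHermitian) {f : ℝ → ℝ}
    (h : (cfcH f A).PosSemidef) (i : n) : 0 ≤ f (hA.eigenvalues i) := by
  have h2 := h.dotProduct_mulVec_nonneg ((hA.eigenvectorUnitary : Matrix n n ℂ) *ᵥ Pi.single i 1)
  rw [qf_cfcH hA, unitary_cancel hA] at h2
  rw [Complex.zero_le_real] at h2
  have h3 : ∑ k, f (hA.eigenvalues k) * ‖(Pi.single i 1 : n → ℂ) k‖^2
      = f (hA.eigenvalues i) := by
    rw [Finset.sum_eq_single i]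
    · simp
    · intro k _ hk
      simp [Pi.single_apply, hk]
    · intro h; exact absurd (Finset.mem_univ i) h
  rwa [h3] at h2

lemma spec_pos (hA : A.PosDef) : ∀ x ∈ spectrum ℝ A, 0 < x := by
  intro x hx
  rw [hA.1.spectrum_real_eq_range_eigenvalues] at hx
  obtain ⟨i, rfl⟩ := hx
  exact hA.eigenvalues_pos i

lemma rsmul (r : ℝ) (M : Matrix n n ℂ) : r • M = (r : ℂ) • M := by
  ext i j
  simp [Complex.real_smul]

lemma isHermitian_rsmul {r : ℝ} (hA : A.IsHermitian) : (r • A).IsHermitian := by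
  rw [rsmul]
  unfold Matrix.IsHermitian at *
  rw [conjTranspose_smul, Complex.star_def, Complex.conj_ofReal, hA]

lemma posSemidef_rsmul {r : ℝ} (hA : A.PosSemidef) (hr : 0 ≤ r) : (r • A).PosSemidef := by
  refine Matrix.PosSemidef.of_dotProduct_mulVec_nonneg (isHermitian_rsmul hA.1) fun x => ?_
  rw [rsmul, smul_mulVec, dotProduct_smul, smul_eq_mul]
  exact mul_nonneg (Complex.zero_le_real.mpr hr) (hA.dotProduct_mulVec_nonneg x)

lemma posDef_rsmul {r : ℝ} (hA : A.PosDef) (hr : 0 < r) : (r • A).PosDef := by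
  refine Matrix.PosDef.of_dotProduct_mulVec_pos (isHermitian_rsmul hA.1) fun x hx => ?_
  rw [rsmul, smul_mulVec, dotProduct_smul, smul_eq_mul]
  exact mul_pos (Complex.zero_lt_real.mpr hr) (hA.dotProduct_mulVec_pos hx)

lemma loewner_refl (A : Matrix n n ℂ) : loewner A A := by
  unfold loewner
  rw [sub_self]
  exact Matrix.PosSemidef.zero

lemma loewner_trans (h1 : loewner A B) (h2 : loewner B C) : loewner A C := by
  have := h2.add h1
  unfold loewner at *
  convert this using 1
  abel

lemma loewner_add (h1 : loewner A B) (h2 : loewner X Y) : loewner (A + X) (B + Y) := by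
  have := h1.add h2
  unfold loewner at *
  convert this using 1
  abel

lemma loewner_smul {r : ℝ} (hr : 0 ≤ r) (h : loewner A B) : loewner (r • A) (r • B) := by
  unfold loewner at *
  rw [← smul_sub]
  exact posSemidef_rsmul h hr

lemma loewner_conj (h : loewner A B) (C : Matrix n n ℂ) :
    loewner (C * A * Cᴴ) (C * B * Cᴴ) := by
  unfold loewner at *
  have := h.mul_mul_conjTranspose_same C
  convert this using 1
  rw [Matrix.mul_sub, Matrix.sub_mul]

lemma posDef_conj (hA : A.PosDef) (hC : C.PosDef) : (C * A * C).PosDef := by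
  have hCH : Cᴴ = C := hC.1
  have hstar : star C = C := by rw [star_eq_conjTranspose, hCH]
  refine Matrix.PosDef.of_dotProduct_mulVec_pos ?_ fun x hx => ?_
  · unfold Matrix.IsHermitian
    rw [conjTranspose_mul, conjTranspose_mul, hCH, hA.1, Matrix.mul_assoc]
  · have hCx : C *ᵥ x ≠ 0 := by
      intro h
      have h2 := hC.dotProduct_mulVec_pos hx
      rw [show star x ⬝ᵥ C *ᵥ x = (0:ℂ) by rw [h, dotProduct_zero]] at h2
      exact lt_irrefl _ h2
    have h1 : (C * A * C) *ᵥ x = C *ᵥ (A *ᵥ (C *ᵥ x)) := by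
      simp [mulVec_mulVec, Matrix.mul_assoc]
    rw [h1, dot_unitary, hstar]
    exact hA.dotProduct_mulVec_pos hCx

lemma cfcH_inv_eq (hA : A.IsHermitian) {f : ℝ → ℝ} (hf : ∀ x ∈ spectrum ℝ A, f x ≠ 0) :
    (cfcH f A)⁻¹ = cfcH (fun t => (f t)⁻¹) A :=
  Matrix.inv_eq_right_inv (by
    rw [← cfcH_mul, ← cfcH_one hA]
    exact cfcH_congr fun x hx => mul_inv_cancel₀ (hf x hx))

lemma mpow_eq_cfcH (hA : A.IsHermitian) (r : ℝ) : mpow A r = cfcH (fun t : ℝ => t ^ r) A := by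
  rw [cfcH, mpow, dif_pos hA, Matrix.IsHermitian.cfc_eq]; rfl

lemma mpow_isHermitian (hA : A.IsHermitian) (r : ℝ) : (mpow A r).IsHermitian := by
  rw [mpow_eq_cfcH hA]; exact cfcH_isHermitian _ A

lemma mpow_posDef (hA : A.PosDef) (r : ℝ) : (mpow A r).PosDef := by
  rw [mpow_eq_cfcH hA.1]
  exact cfcH_posDef hA.1 fun i => Real.rpow_pos_of_pos (hA.eigenvalues_pos i) r

lemma mpow_one (hA : A.IsHermitian) : mpow A 1 = A := by
  rw [mpow_eq_cfcH hA, show (fun t : ℝ => t ^ (1:ℝ)) = fun t => t from funext fun t => Real.rpow_one t]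
  exact cfcH_id hA

lemma mpow_zero (hA : A.IsHermitian) : mpow A 0 = 1 := by
  rw [mpow_eq_cfcH hA, show (fun t : ℝ => t ^ (0:ℝ)) = fun _ => (1:ℝ) from
    funext fun t => Real.rpow_zero t]
  exact cfcH_one hA

lemma mpow_mul_mpow (hA : A.PosDef) (r s : ℝ) : mpow A r * mpow A s = mpow A (r + s) := by
  rw [mpow_eq_cfcH hA.1, mpow_eq_cfcH hA.1, mpow_eq_cfcH hA.1, ← cfcH_mul]
  exact cfcH_congr fun x hx => (Real.rpow_add (spec_pos hA x hx) r s).symm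

lemma mpow_smul (hA : A.PosDef) {c : ℝ} (hc : 0 < c) (r : ℝ) :
    mpow (c • A) r = (c ^ r : ℝ) • mpow A r := by
  have h1 : (c • A).IsHermitian := isHermitian_rsmul hA.1
  rw [mpow_eq_cfcH h1, mpow_eq_cfcH hA.1]
  have hfin : (((c • ·) : ℝ → ℝ) '' (spectrum ℝ A)).Finite :=
    Set.Finite.image _ (Matrix.finite_real_spectrum (A := A))
  have key : cfcH (fun t : ℝ => (c • t) ^ r) A = cfcH (fun t : ℝ => t ^ r) (c • A) :=
    cfc_comp_smul (p := IsSelfAdjoint) c (fun t : ℝ => t ^ r) A (contOnFinite hfin _) hA.1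
  rw [← key, ← cfcH_const_mul (c ^ r : ℝ) (fun t : ℝ => t ^ r) A]
  exact cfcH_congr fun x hx => by
    simp only [smul_eq_mul]
    rw [Real.mul_rpow hc.le (spec_pos hA x hx).le]

lemma mpow_neg_eq_inv (hA : A.PosDef) (r : ℝ) : mpow A (-r) = (mpow A r)⁻¹ := by
  rw [mpow_eq_cfcH hA.1, mpow_eq_cfcH hA.1,
    cfcH_inv_eq hA.1 (fun x hx => (Real.rpow_pos_of_pos (spec_pos hA x hx) r).ne')]
  exact cfcH_congr fun x hx => (Real.rpow_neg (spec_pos hA x hx).le r).trans (by simp)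

lemma inv_eq_mpow_neg_one (hA : A.PosDef) : A⁻¹ = mpow A (-1) := by
  rw [mpow_neg_eq_inv hA, mpow_one hA.1]

lemma pd_mul_inv (hY : Y.PosDef) : Y * Y⁻¹ = 1 :=
  Matrix.mul_nonsing_inv Y (isUnit_iff_ne_zero.mpr hY.det_pos.ne')

lemma conj_cancel {R S M : Matrix n n ℂ} (hRS : R * S = 1) (hSR : S * R = 1) :
    R * (S * M * S) * R = M := by
  rw [show R * (S * M * S) * R = R * S * M * (S * R) by noncomm_ring, hRS, hSR, one_mul, mul_one]

lemma hRS (hX : X.PosDef) : mpow X (-((1:ℝ)/2)) * mpow X ((1:ℝ)/2) = 1 := by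
  rw [mpow_mul_mpow hX, show -((1:ℝ)/2) + (1:ℝ)/2 = 0 by ring, mpow_zero hX.1]

lemma hSR (hX : X.PosDef) : mpow X ((1:ℝ)/2) * mpow X (-((1:ℝ)/2)) = 1 := by
  rw [mpow_mul_mpow hX, show (1:ℝ)/2 + -((1:ℝ)/2) = 0 by ring, mpow_zero hX.1]

lemma hRXR (hX : X.PosDef) : mpow X (-((1:ℝ)/2)) * X * mpow X (-((1:ℝ)/2)) = 1 := by
  have h1 : mpow X (-((1:ℝ)/2)) * X * mpow X (-((1:ℝ)/2))
      = mpow X (-((1:ℝ)/2)) * mpow X 1 * mpow X (-((1:ℝ)/2)) := by rw [mpow_one hX.1]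
  rw [h1, mpow_mul_mpow hX, mpow_mul_mpow hX, show -((1:ℝ)/2) + 1 + -((1:ℝ)/2) = 0 by ring,
    mpow_zero hX.1]

lemma hSXiS (hX : X.PosDef) : mpow X ((1:ℝ)/2) * X⁻¹ * mpow X ((1:ℝ)/2) = 1 := by
  rw [inv_eq_mpow_neg_one hX, mpow_mul_mpow hX, mpow_mul_mpow hX,
    show (1:ℝ)/2 + -1 + (1:ℝ)/2 = 0 by ring, mpow_zero hX.1]

lemma hRR (hX : X.PosDef) : mpow X (-((1:ℝ)/2)) * mpow X (-((1:ℝ)/2)) = X⁻¹ := by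
  rw [mpow_mul_mpow hX, show -((1:ℝ)/2) + -((1:ℝ)/2) = -1 by ring, ← inv_eq_mpow_neg_one hX]


lemma conj_inv {R S M : Matrix n n ℂ} (hRS : R * S = 1) (hM : M * M⁻¹ = 1) :
    (R * M * R)⁻¹ = S * M⁻¹ * S := by
  refine Matrix.inv_eq_right_inv ?_
  rw [show R * M * R * (S * M⁻¹ * S) = R * M * (R * S) * (M⁻¹ * S) by noncomm_ring, hRS, mul_one,
    show R * M * (M⁻¹ * S) = R * (M * M⁻¹) * S by noncomm_ring, hM, mul_one, hRS]

lemma one_le_inv_le {W : Matrix n n ℂ} (hW : W.PosDef) (h : loewner 1 W) :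
    loewner W⁻¹ 1 := by
  have hWh := hW.1
  have heig : ∀ i, 0 ≤ hWh.eigenvalues i - 1 := by
    intro i
    refine eig_nonneg_of_psd hWh (f := fun t => t - 1) ?_ i
    have heq : cfcH (fun t : ℝ => t - 1) W = W - 1 := by
      rw [cfcH_sub (fun t : ℝ => t) (fun _ => (1:ℝ)) W, cfcH_id hWh, cfcH_one hWh]
    rw [heq]
    exact h
  have hinv : W⁻¹ = cfcH (fun t : ℝ => t⁻¹) W := by
    conv_lhs => rw [← cfcH_id hWh]
    exact cfcH_inv_eq hWh fun x hx => (spec_pos hW x hx).ne'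
  unfold loewner
  have heq2 : (1 : Matrix n n ℂ) - W⁻¹ = cfcH (fun t : ℝ => 1 - t⁻¹) W := by
    rw [cfcH_sub (fun _ => (1:ℝ)) (fun t : ℝ => t⁻¹) W, cfcH_one hWh, hinv]
  rw [heq2]
  refine cfcH_posSemidef hWh fun i => ?_
  have h1 : (1:ℝ) ≤ hWh.eigenvalues i := by linarith [heig i]
  have : (hWh.eigenvalues i)⁻¹ ≤ 1 := by
    rw [inv_le_one_iff₀]
    right; exact h1
  linarith

lemma inv_antitone (hX : X.PosDef) (hY : Y.PosDef) (h : loewner X Y) :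
    loewner Y⁻¹ X⁻¹ := by
  set R := mpow X (-((1:ℝ)/2)) with hRdef
  set S := mpow X ((1:ℝ)/2) with hSdef
  have hRherm : Rᴴ = R := mpow_isHermitian hX.1 _
  have hRpd : R.PosDef := mpow_posDef hX _
  have hY' : (R * Y * R).PosDef := posDef_conj hY hRpd
  have h1le : loewner 1 (R * Y * R) := by
    have h2 := loewner_conj h R
    rwa [hRherm, hRXR hX] at h2
  have hstep := one_le_inv_le hY' h1le
  have hYinv : (R * Y * R)⁻¹ = S * Y⁻¹ * S := conj_inv (hRS hX) (pd_mul_inv hY)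
  rw [hYinv] at hstep
  have h3 := loewner_conj hstep R
  rwa [hRherm, conj_cancel (hRS hX) (hSR hX), mul_one, hRR hX] at h3

lemma inv_convex (hX : X.PosDef) (hY : Y.PosDef) {w w' : ℝ} (hw : 0 < w) (hw' : 0 < w')
    (hww : w + w' = 1) : loewner ((w • X + w' • Y)⁻¹) (w • X⁻¹ + w' • Y⁻¹) := by
  set R := mpow X (-((1:ℝ)/2)) with hRdef
  set S := mpow X ((1:ℝ)/2) with hSdef
  have hRherm : Rᴴ = R := mpow_isHermitian hX.1 _
  have hSherm : Sᴴ = S := mpow_isHermitian hX.1 _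
  have hRpd : R.PosDef := mpow_posDef hX _
  have hSpd : S.PosDef := mpow_posDef hX _
  set Y' := R * Y * R with hY'def
  have hY' : Y'.PosDef := posDef_conj hY hRpd
  set Z := w • X + w' • Y with hZdef
  have hZ : Z.PosDef := (posDef_rsmul hX hw).add_posSemidef (posSemidef_rsmul hY.posSemidef hw'.le)
  have hZ' : R * Z * R = w • (1 : Matrix n n ℂ) + w' • Y' := by
    rw [hZdef, Matrix.mul_add, Matrix.add_mul, mul_smul_comm, mul_smul_comm,
      smul_mul_assoc, smul_mul_assoc, hRXR hX]
  have hcfc1 : w • (1 : Matrix n n ℂ) + w' • Y' = cfcH (fun t : ℝ => w + w' * t) Y' := by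
    rw [cfcH_add (fun _ => w) (fun t : ℝ => w' * t) Y', cfcH_const w hY'.1,
      cfcH_const_mul w' (fun t : ℝ => t) Y', cfcH_id hY'.1]
  have hposg : ∀ x ∈ spectrum ℝ Y', 0 < w + w' * x := fun x hx => by
    have := spec_pos hY' x hx; positivity
  have hWpd : (w • (1 : Matrix n n ℂ) + w' • Y').PosDef := by
    rw [hcfc1]
    refine cfcH_posDef hY'.1 fun i => ?_
    have := hY'.eigenvalues_pos i; positivity
  have hZ'inv : (w • (1 : Matrix n n ℂ) + w' • Y')⁻¹ = cfcH (fun t : ℝ => (w + w' * t)⁻¹) Y' := by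
    rw [hcfc1]
    exact cfcH_inv_eq hY'.1 fun x hx => (hposg x hx).ne'
  have hY'inv : Y'⁻¹ = cfcH (fun t : ℝ => t⁻¹) Y' := by
    conv_lhs => rw [← cfcH_id hY'.1]
    exact cfcH_inv_eq hY'.1 fun x hx => (spec_pos hY' x hx).ne'
  have hcfc2 : w • (1 : Matrix n n ℂ) + w' • Y'⁻¹ = cfcH (fun t : ℝ => w + w' * t⁻¹) Y' := by
    rw [cfcH_add (fun _ => w) (fun t : ℝ => w' * t⁻¹) Y', cfcH_const w hY'.1,
      cfcH_const_mul w' (fun t : ℝ => t⁻¹) Y', hY'inv]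
  have hkey : loewner ((w • (1 : Matrix n n ℂ) + w' • Y')⁻¹)
      (w • (1 : Matrix n n ℂ) + w' • Y'⁻¹) := by
    unfold loewner
    rw [hZ'inv, hcfc2, ← cfcH_sub (fun t : ℝ => w + w' * t⁻¹) (fun t : ℝ => (w + w' * t)⁻¹) Y']
    refine cfcH_posSemidef hY'.1 fun i => ?_
    have ht : 0 < hY'.1.eigenvalues i := hY'.eigenvalues_pos i
    set t := hY'.1.eigenvalues i
    have h1 : 0 < w + w' * t := by positivity
    have hu0 : 0 < t⁻¹ := inv_pos.mpr ht
    have htu : t * t⁻¹ = 1 := mul_inv_cancel₀ ht.ne'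
    have ht2u : t^2 * t⁻¹ = t := by field_simp
    have hut : 0 ≤ t + t⁻¹ - 2 := by
      nlinarith [mul_nonneg (sq_nonneg (t-1)) hu0.le, ht2u, htu]
    have hsq : (w + w')^2 = 1 := by rw [hww]; norm_num
    have key : 1 ≤ (w + w' * t⁻¹) * (w + w' * t) := by
      have hexp : (w + w' * t⁻¹) * (w + w' * t)
          = w^2 + w'^2 * (t * t⁻¹) + w * w' * (t + t⁻¹) := by ring
      rw [hexp, htu, mul_one]
      nlinarith [mul_nonneg (mul_pos hw hw').le hut, hsq]
    have h2 : (w + w' * t)⁻¹ * ((w + w' * t⁻¹) * (w + w' * t)) = w + w' * t⁻¹ := by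
      field_simp
    have h3 : (w + w' * t)⁻¹ * 1 ≤ (w + w' * t)⁻¹ * ((w + w' * t⁻¹) * (w + w' * t)) :=
      mul_le_mul_of_nonneg_left key (inv_nonneg.mpr h1.le)
    rw [h2, mul_one] at h3
    linarith
  -- transport back by conjugating with R
  have hZinv : S * Z⁻¹ * S = (w • (1 : Matrix n n ℂ) + w' • Y')⁻¹ := by
    rw [← hZ']
    exact (conj_inv (hRS hX) (pd_mul_inv hZ)).symm
  have hXinv : S * X⁻¹ * S = 1 := hSXiS hX
  have hYiconj : S * Y⁻¹ * S = Y'⁻¹ := (conj_inv (hRS hX) (pd_mul_inv hY)).symm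
  have hRHS : S * (w • X⁻¹ + w' • Y⁻¹) * S = w • (1 : Matrix n n ℂ) + w' • Y'⁻¹ := by
    rw [Matrix.mul_add, Matrix.add_mul, mul_smul_comm, mul_smul_comm,
      smul_mul_assoc, smul_mul_assoc, hXinv, hYiconj]
  -- hkey says loewner (S Z⁻¹ S) (S RHS S); conjugate by R
  rw [← hZinv, ← hRHS] at hkey
  have h4 := loewner_conj hkey R
  rwa [hRherm, conj_cancel (hRS hX) (hSR hX), conj_cancel (hRS hX) (hSR hX)] at h4


section Integral
open MeasureTheory Set

noncomputable def Jq (q : ℝ) : ℝ := ∫ u in Ioi (0:ℝ), u^(q-1)/(1+u)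

variable {q : ℝ}

lemma meas_base : Measurable fun u : ℝ => u^(q-1)/(1+u) :=
  (measurable_id.pow_const _).div (measurable_const.add measurable_id) |>.mono le_rfl le_rfl

lemma integrableOn_base (hq0 : 0 < q) (hq1 : q < 1) :
    IntegrableOn (fun u : ℝ => u^(q-1)/(1+u)) (Ioi (0:ℝ)) := by
  have hmeas : Measurable fun u : ℝ => u^(q-1)/(1+u) := meas_base
  have h1 : IntegrableOn (fun u : ℝ => u^(q-1)/(1+u)) (Ioc (0:ℝ) 1) := by
    have hint : IntegrableOn (fun u : ℝ => u^(q-1)) (Ioc (0:ℝ) 1) := by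
      have h := intervalIntegral.intervalIntegrable_rpow' (a := (0:ℝ)) (b := 1) (r := q-1)
        (by linarith)
      rwa [intervalIntegrable_iff_integrableOn_Ioc_of_le zero_le_one] at h
    refine Integrable.mono hint hmeas.aestronglyMeasurable.restrict ?_
    refine (ae_restrict_iff' measurableSet_Ioc).mpr (Filter.Eventually.of_forall fun u hu => ?_)
    have hu0 : 0 < u := hu.1
    have hpow : 0 ≤ u^(q-1) := Real.rpow_nonneg hu0.le _
    rw [Real.norm_eq_abs, Real.norm_eq_abs, abs_of_nonneg (by positivity), abs_of_nonneg hpow]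
    exact div_le_self hpow (by linarith)
  have h2 : IntegrableOn (fun u : ℝ => u^(q-1)/(1+u)) (Ioi (1:ℝ)) := by
    have hint : IntegrableOn (fun u : ℝ => u^(q-2)) (Ioi (1:ℝ)) :=
      integrableOn_Ioi_rpow_of_lt (by linarith) one_pos
    refine Integrable.mono hint hmeas.aestronglyMeasurable.restrict ?_
    refine (ae_restrict_iff' measurableSet_Ioi).mpr (Filter.Eventually.of_forall fun u hu => ?_)
    have hu0 : (1:ℝ) < u := hu
    have hu0' : (0:ℝ) < u := lt_trans one_pos hu0
    have hpow : 0 ≤ u^(q-1) := Real.rpow_nonneg hu0'.le _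
    rw [Real.norm_eq_abs, Real.norm_eq_abs, abs_of_nonneg (by positivity),
      abs_of_nonneg (Real.rpow_nonneg hu0'.le _)]
    have step1 : u^(q-1)/(1+u) ≤ u^(q-1)/u :=
      div_le_div_of_nonneg_left hpow hu0' (by linarith)
    have step2 : u^(q-2) = u^(q-1)/u := by
      rw [show q - 2 = (q-1) - 1 by ring, Real.rpow_sub hu0', Real.rpow_one]
    linarith [step1, step2.le]
  have h := h1.union h2
  rwa [Ioc_union_Ioi_eq_Ioi zero_le_one] at h

lemma Jq_pos (hq0 : 0 < q) (hq1 : q < 1) : 0 < Jq q := by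
  rw [Jq]
  rw [setIntegral_pos_iff_support_of_nonneg_ae ?hf (integrableOn_base hq0 hq1)]
  case hf =>
    refine (ae_restrict_iff' measurableSet_Ioi).mpr (Filter.Eventually.of_forall fun u hu => ?_)
    have : (0:ℝ) < u := hu
    positivity
  have hsub : Ioi (0:ℝ) ⊆ Function.support (fun u : ℝ => u^(q-1)/(1+u)) ∩ Ioi 0 := by
    intro u hu
    have hu0 : (0:ℝ) < u := hu
    refine ⟨?_, hu⟩
    simp only [Function.mem_support]
    positivity
  refine lt_of_lt_of_le ?_ (measure_mono hsub)
  rw [Real.volume_Ioi]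
  exact ENNReal.zero_lt_top

lemma integral_g (hq0 : 0 < q) (hq1 : q < 1) {m : ℝ} (hm : 0 < m) :
    IntegrableOn (fun l : ℝ => l^(q-1) * (m/(m+l))) (Ioi (0:ℝ)) ∧
    ∫ l in Ioi (0:ℝ), l^(q-1) * (m/(m+l)) = m^q * Jq q := by
  set F : ℝ → ℝ := fun l => l^(q-1) * (m/(m+l)) with hF
  have hcomp : ∀ u ∈ Ioi (0:ℝ), F (m * u) = m^(q-1) * (u^(q-1)/(1+u)) := by
    intro u hu
    have hu0 : (0:ℝ) < u := hu
    rw [hF]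
    simp only
    rw [Real.mul_rpow hm.le hu0.le]
    have : m / (m + m*u) = 1/(1+u) := by
      rw [show m + m*u = m*(1+u) by ring]
      rw [div_eq_div_iff (by positivity) (by positivity)]
      ring
    rw [this]
    ring
  have hintc : IntegrableOn (fun u => F (m * u)) (Ioi (0:ℝ)) := by
    refine IntegrableOn.congr_fun ?_ (fun u hu => (hcomp u hu).symm) measurableSet_Ioi
    exact (integrableOn_base hq0 hq1).const_mul _
  have hint : IntegrableOn F (Ioi (0:ℝ)) := by
    have h := (integrableOn_Ioi_comp_mul_left_iff F 0 hm).mp ?_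
    · rwa [mul_zero] at h
    · exact hintc
  refine ⟨hint, ?_⟩
  have h2 := integral_comp_mul_left_Ioi F 0 hm
  rw [mul_zero] at h2
  have h1 : ∫ u in Ioi (0:ℝ), F (m * u) = m^(q-1) * Jq q := by
    rw [setIntegral_congr_fun measurableSet_Ioi hcomp, MeasureTheory.integral_const_mul, Jq]
  rw [h1, smul_eq_mul] at h2
  have hmq : m * m^(q-1) = m^q := by
    nth_rewrite 1 [← Real.rpow_one m]
    rw [← Real.rpow_add hm]
    ring_nf
  have : ∫ x in Ioi (0:ℝ), F x = m * (m^(q-1) * Jq q) := by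
    rw [h2, ← mul_assoc, mul_inv_cancel₀ hm.ne', one_mul]
  rw [this, ← mul_assoc, hmq]

end Integral

section Concave
open MeasureTheory Set

variable {q : ℝ}

lemma intrep (hq0 : 0 < q) (hq1 : q < 1) (e a : n → ℝ) (he : ∀ i, 0 < e i) :
    IntegrableOn (fun l : ℝ => l^(q-1) * (∑ i, (e i/(e i + l)) * a i)) (Ioi (0:ℝ)) ∧
    ∫ l in Ioi (0:ℝ), l^(q-1) * (∑ i, (e i/(e i + l)) * a i) = Jq q * ∑ i, (e i)^q * a i := by
  have hfun : (fun l : ℝ => l^(q-1) * (∑ i, (e i/(e i + l)) * a i))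
      = fun l : ℝ => ∑ i, a i * (l^(q-1) * (e i/(e i + l))) := by
    funext l
    rw [Finset.mul_sum]
    exact Finset.sum_congr rfl fun i _ => by ring
  have hint : ∀ i : n, IntegrableOn (fun l : ℝ => a i * (l^(q-1) * (e i/(e i + l)))) (Ioi (0:ℝ)) :=
    fun i => ((integral_g hq0 hq1 (he i)).1).const_mul _
  constructor
  · rw [hfun]
    exact integrable_finset_sum _ fun i _ => hint i
  · rw [hfun, integral_finset_sum _ fun i _ => hint i]
    have hterm : ∀ i : n, ∫ l in Ioi (0:ℝ), a i * (l^(q-1) * (e i/(e i + l)))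
        = a i * ((e i)^q * Jq q) := by
      intro i
      rw [MeasureTheory.integral_const_mul, (integral_g hq0 hq1 (he i)).2]
    rw [Finset.sum_congr rfl fun i _ => hterm i, Finset.mul_sum]
    exact Finset.sum_congr rfl fun i _ => by ring

lemma qf_comb (M1 M2 M3 : Matrix n n ℂ) (w w' : ℝ) (x : n → ℂ) :
    star x ⬝ᵥ ((M1 - (w • M2 + w' • M3)) *ᵥ x)
      = star x ⬝ᵥ (M1 *ᵥ x) - ((w:ℂ) * (star x ⬝ᵥ (M2 *ᵥ x)) + (w':ℂ) * (star x ⬝ᵥ (M3 *ᵥ x))) := by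
  rw [sub_mulVec, add_mulVec, rsmul w, rsmul w', smul_mulVec, smul_mulVec,
    dotProduct_sub, dotProduct_add, dotProduct_smul, dotProduct_smul, smul_eq_mul, smul_eq_mul]

lemma cayley {W : Matrix n n ℂ} (hW : W.PosDef) {l : ℝ} (hl : 0 < l) :
    cfcH (fun t => t/(t+l)) W = 1 - l • (W + l • (1 : Matrix n n ℂ))⁻¹ := by
  have hplus : W + l • (1 : Matrix n n ℂ) = cfcH (fun t => t + l) W := by
    rw [cfcH_add (fun t => t) (fun _ => l) W, cfcH_id hW.1, cfcH_const l hW.1]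
  have hinv : (W + l • (1 : Matrix n n ℂ))⁻¹ = cfcH (fun t => (t+l)⁻¹) W := by
    rw [hplus]
    exact cfcH_inv_eq hW.1 fun x hx => by have := spec_pos hW x hx; positivity
  rw [hinv, ← cfcH_const_mul l (fun t => (t+l)⁻¹) W, ← cfcH_one hW.1,
    ← cfcH_sub (fun _ => (1:ℝ)) (fun t => l * (t+l)⁻¹) W]
  refine cfcH_congr fun x hx => ?_
  have hx0 := spec_pos hW x hx
  field_simp
  ring

lemma posDef_add_smul_one {W : Matrix n n ℂ} (hW : W.PosDef) {l : ℝ} (hl : 0 < l) :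
    (W + l • (1 : Matrix n n ℂ)).PosDef :=
  hW.add_posSemidef (posSemidef_rsmul Matrix.PosSemidef.one hl.le)

lemma rpow_concave (hq0 : 0 < q) (hq1 : q ≤ 1) (hX : X.PosDef) (hY : Y.PosDef)
    {w w' : ℝ} (hw : 0 < w) (hw' : 0 < w') (hww : w + w' = 1) :
    loewner (w • mpow X q + w' • mpow Y q) (mpow (w • X + w' • Y) q) := by
  have hZ : (w • X + w' • Y).PosDef :=
    (posDef_rsmul hX hw).add_posSemidef (posSemidef_rsmul hY.posSemidef hw'.le)
  set Z := w • X + w' • Y with hZdef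
  rcases eq_or_lt_of_le hq1 with rfl | hq1'
  · rw [mpow_one hX.1, mpow_one hY.1, mpow_one hZ.1]
    exact loewner_refl Z
  have matineq : ∀ l : ℝ, 0 < l →
      (cfcH (fun t => t/(t+l)) Z - (w • cfcH (fun t => t/(t+l)) X
        + w' • cfcH (fun t => t/(t+l)) Y)).PosSemidef := by
    intro l hl
    have hXl := posDef_add_smul_one hX hl
    have hYl := posDef_add_smul_one hY hl
    have hone : w • (1:Matrix n n ℂ) + w' • (1:Matrix n n ℂ) = 1 := by
      rw [← add_smul, hww, one_smul]
    have hsum : w • (X + l • (1:Matrix n n ℂ)) + w' • (Y + l • (1:Matrix n n ℂ))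
        = Z + l • (1:Matrix n n ℂ) := by
      rw [hZdef, smul_add, smul_add, add_add_add_comm, smul_smul, smul_smul, ← add_smul,
        show w * l + w' * l = l by rw [← add_mul, hww, one_mul]]
    have hconv := inv_convex hXl hYl hw hw' hww
    rw [hsum] at hconv
    have hsmul := loewner_smul hl.le hconv
    unfold loewner at hsmul
    rw [cayley hZ hl, cayley hX hl, cayley hY hl]
    convert hsmul using 1
    have expand : w • ((1:Matrix n n ℂ) - l • (X + l • (1:Matrix n n ℂ))⁻¹)
          + w' • ((1:Matrix n n ℂ) - l • (Y + l • (1:Matrix n n ℂ))⁻¹)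
        = (w • (1:Matrix n n ℂ) + w' • (1:Matrix n n ℂ))
          - l • (w • (X + l • (1:Matrix n n ℂ))⁻¹ + w' • (Y + l • (1:Matrix n n ℂ))⁻¹) := by
      module
    rw [expand, hone]
    module
  refine Matrix.PosSemidef.of_dotProduct_mulVec_nonneg ((mpow_isHermitian hZ.1 q).sub
    ((isHermitian_rsmul (mpow_isHermitian hX.1 q)).add
      (isHermitian_rsmul (mpow_isHermitian hY.1 q)))) fun x => ?_
  set eX := hX.1.eigenvalues with heX
  set eY := hY.1.eigenvalues with heY
  set eZ := hZ.1.eigenvalues with heZ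
  set aX : n → ℝ := fun i => ‖(star (hX.1.eigenvectorUnitary : Matrix n n ℂ) *ᵥ x) i‖^2 with haX
  set aY : n → ℝ := fun i => ‖(star (hY.1.eigenvectorUnitary : Matrix n n ℂ) *ᵥ x) i‖^2 with haY
  set aZ : n → ℝ := fun i => ‖(star (hZ.1.eigenvectorUnitary : Matrix n n ℂ) *ᵥ x) i‖^2 with haZ
  have haXp : ∀ i, 0 ≤ aX i := fun i => sq_nonneg _
  have haYp : ∀ i, 0 ≤ aY i := fun i => sq_nonneg _
  have qfmX : star x ⬝ᵥ (mpow X q) *ᵥ x = ((∑ i, (eX i)^q * aX i : ℝ) : ℂ) := by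
    rw [mpow_eq_cfcH hX.1]; exact qf_cfcH hX.1 _ x
  have qfmY : star x ⬝ᵥ (mpow Y q) *ᵥ x = ((∑ i, (eY i)^q * aY i : ℝ) : ℂ) := by
    rw [mpow_eq_cfcH hY.1]; exact qf_cfcH hY.1 _ x
  have qfmZ : star x ⬝ᵥ (mpow Z q) *ᵥ x = ((∑ i, (eZ i)^q * aZ i : ℝ) : ℂ) := by
    rw [mpow_eq_cfcH hZ.1]; exact qf_cfcH hZ.1 _ x
  have qflX : ∀ l : ℝ, star x ⬝ᵥ (cfcH (fun t => t/(t+l)) X) *ᵥ x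
      = ((∑ i, (eX i/(eX i + l)) * aX i : ℝ) : ℂ) := fun l => qf_cfcH hX.1 _ x
  have qflY : ∀ l : ℝ, star x ⬝ᵥ (cfcH (fun t => t/(t+l)) Y) *ᵥ x
      = ((∑ i, (eY i/(eY i + l)) * aY i : ℝ) : ℂ) := fun l => qf_cfcH hY.1 _ x
  have qflZ : ∀ l : ℝ, star x ⬝ᵥ (cfcH (fun t => t/(t+l)) Z) *ᵥ x
      = ((∑ i, (eZ i/(eZ i + l)) * aZ i : ℝ) : ℂ) := fun l => qf_cfcH hZ.1 _ x
  have hpt : ∀ l : ℝ, 0 < l →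
      0 ≤ (∑ i, (eZ i/(eZ i + l)) * aZ i)
        - (w * ∑ i, (eX i/(eX i + l)) * aX i + w' * ∑ i, (eY i/(eY i + l)) * aY i) := by
    intro l hl
    have h := (matineq l hl).dotProduct_mulVec_nonneg x
    rw [qf_comb, qflZ l, qflX l, qflY l] at h
    rw [show ((∑ i, (eZ i/(eZ i + l)) * aZ i : ℝ) : ℂ)
        - ((w:ℂ) * ((∑ i, (eX i/(eX i + l)) * aX i : ℝ) : ℂ)
          + (w':ℂ) * ((∑ i, (eY i/(eY i + l)) * aY i : ℝ) : ℂ))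
        = (((∑ i, (eZ i/(eZ i + l)) * aZ i)
          - (w * ∑ i, (eX i/(eX i + l)) * aX i + w' * ∑ i, (eY i/(eY i + l)) * aY i) : ℝ) : ℂ) by
      push_cast; ring] at h
    exact Complex.zero_le_real.mp h
  have hiX := intrep hq0 hq1' eX aX fun i => hX.eigenvalues_pos i
  have hiY := intrep hq0 hq1' eY aY fun i => hY.eigenvalues_pos i
  have hiZ := intrep hq0 hq1' eZ aZ fun i => hZ.eigenvalues_pos i
  set fX : ℝ → ℝ := fun l => l^(q-1) * (∑ i, (eX i/(eX i + l)) * aX i) with hfX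
  set fY : ℝ → ℝ := fun l => l^(q-1) * (∑ i, (eY i/(eY i + l)) * aY i) with hfY
  set fZ : ℝ → ℝ := fun l => l^(q-1) * (∑ i, (eZ i/(eZ i + l)) * aZ i) with hfZ
  have hnonneg : 0 ≤ ∫ l in Ioi (0:ℝ), (fZ l - (w * fX l + w' * fY l)) := by
    refine setIntegral_nonneg measurableSet_Ioi fun l hl => ?_
    have hl0 : (0:ℝ) < l := hl
    have hp := hpt l hl0
    have hpw : 0 ≤ l^(q-1) := Real.rpow_nonneg hl0.le _
    have hmul := mul_nonneg hpw hp
    rw [hfZ, hfX, hfY]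
    simp only
    nlinarith [hmul]
  have hsplit : ∫ l in Ioi (0:ℝ), (fZ l - (w * fX l + w' * fY l))
      = (Jq q * ∑ i, (eZ i)^q * aZ i)
        - (w * (Jq q * ∑ i, (eX i)^q * aX i) + w' * (Jq q * ∑ i, (eY i)^q * aY i)) := by
    have hXw : Integrable (fun l => w * fX l) (volume.restrict (Ioi (0:ℝ))) := hiX.1.const_mul w
    have hYw : Integrable (fun l => w' * fY l) (volume.restrict (Ioi (0:ℝ))) := hiY.1.const_mul w'
    have hgint : Integrable (fun l => w * fX l + w' * fY l) (volume.restrict (Ioi (0:ℝ))) := by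
      exact hXw.add hYw
    rw [MeasureTheory.integral_sub (f := fZ) (g := fun l => w * fX l + w' * fY l) hiZ.1 hgint,
      MeasureTheory.integral_add (f := fun l => w * fX l) (g := fun l => w' * fY l) hXw hYw,
      MeasureTheory.integral_const_mul, MeasureTheory.integral_const_mul, hiX.2, hiY.2, hiZ.2]
  rw [hsplit] at hnonneg
  have hJ := Jq_pos hq0 hq1'
  have h9 : 0 ≤ Jq q * ((∑ i, (eZ i)^q * aZ i)
      - (w * ∑ i, (eX i)^q * aX i + w' * ∑ i, (eY i)^q * aY i)) := by nlinarith [hnonneg]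
  have hfinal : 0 ≤ (∑ i, (eZ i)^q * aZ i)
      - (w * ∑ i, (eX i)^q * aX i + w' * ∑ i, (eY i)^q * aY i) :=
    nonneg_of_mul_nonneg_right h9 hJ
  rw [qf_comb, qfmZ, qfmX, qfmY,
    show ((∑ i, (eZ i)^q * aZ i : ℝ) : ℂ)
        - ((w:ℂ) * ((∑ i, (eX i)^q * aX i : ℝ) : ℂ) + (w':ℂ) * ((∑ i, (eY i)^q * aY i : ℝ) : ℂ))
      = (((∑ i, (eZ i)^q * aZ i)
        - (w * ∑ i, (eX i)^q * aX i + w' * ∑ i, (eY i)^q * aY i) : ℝ) : ℂ) by push_cast; ring]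
  exact Complex.zero_le_real.mpr hfinal

end Concave

lemma rpow_neg_convex {p : ℝ} (hp0 : 0 < p) (hp1 : p ≤ 1) (hX : X.PosDef) (hY : Y.PosDef)
    {w w' : ℝ} (hw : 0 < w) (hw' : 0 < w') (hww : w + w' = 1) :
    loewner (mpow (w • X + w' • Y) (-p)) (w • mpow X (-p) + w' • mpow Y (-p)) := by
  have hZ : (w • X + w' • Y).PosDef :=
    (posDef_rsmul hX hw).add_posSemidef (posSemidef_rsmul hY.posSemidef hw'.le)
  have hcon := rpow_concave hp0 hp1 hX hY hw hw' hww
  have hKpd : (w • mpow X p + w' • mpow Y p).PosDef :=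
    (posDef_rsmul (mpow_posDef hX p) hw).add_posSemidef
      (posSemidef_rsmul (mpow_posDef hY p).posSemidef hw'.le)
  have h1 := inv_antitone hKpd (mpow_posDef hZ p) hcon
  have h2 := inv_convex (mpow_posDef hX p) (mpow_posDef hY p) hw hw' hww
  have h3 := loewner_trans h1 h2
  rwa [← mpow_neg_eq_inv hZ p, ← mpow_neg_eq_inv hX p, ← mpow_neg_eq_inv hY p] at h3

lemma lambdaMin_pos [Nonempty n] (hA : A.PosDef) : 0 < lambdaMin A := by
  rw [lambdaMin, dif_pos hA.1]
  obtain ⟨i₀, hi₀⟩ := Finite.exists_min hA.1.eigenvalues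
  exact lt_of_lt_of_le (hA.eigenvalues_pos i₀) (le_ciInf hi₀)

end Aux

open Aux

/-- Key inequality (5.6): with `αⱼ` the smallest eigenvalue of
`(Aⱼ^{p/2} Bⱼ^q Aⱼ^{p/2})^{1/(p+q)}`, if `Bⱼ^q ≥ αⱼ^{p+q} Aⱼ^{-p}` for `j = 1,2`, then
`((B₁+B₂)/2)^q ≥ ((α₁+α₂)/2)^{p+q} · ((A₁+A₂)/2)^{-p}`. -/
theorem stmt9 {n : Type*} [Fintype n] [DecidableEq n]
    (p q : ℝ) (hp0 : 0 < p) (hp1 : p ≤ 1) (hq0 : 0 < q) (hq1 : q ≤ 1)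
    (A₁ A₂ B₁ B₂ : Matrix n n ℂ)
    (hA₁ : A₁.PosDef) (hA₂ : A₂.PosDef) (hB₁ : B₁.PosDef) (hB₂ : B₂.PosDef)
    (α₁ α₂ : ℝ)
    (hα₁ : α₁ = lambdaMin (mpow (mpow A₁ (p/2) * mpow B₁ q * mpow A₁ (p/2)) (1/(p+q))))
    (hα₂ : α₂ = lambdaMin (mpow (mpow A₂ (p/2) * mpow B₂ q * mpow A₂ (p/2)) (1/(p+q))))
    (h₁ : loewner ((α₁ ^ (p+q) : ℝ) • mpow A₁ (-p)) (mpow B₁ q))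
    (h₂ : loewner ((α₂ ^ (p+q) : ℝ) • mpow A₂ (-p)) (mpow B₂ q)) :
    loewner ((((α₁ + α₂) / 2) ^ (p+q) : ℝ) • mpow ((1/2 : ℝ) • (A₁ + A₂)) (-p))
      (mpow ((1/2 : ℝ) • (B₁ + B₂)) q) := by
  rcases isEmpty_or_nonempty n with hn | hn
  · have hz : ∀ M : Matrix n n ℂ, M = 0 := fun M => by
      ext i j; exact isEmptyElim i
    unfold loewner
    rw [hz (mpow ((1/2 : ℝ) • (B₁ + B₂)) q
      - (((α₁ + α₂) / 2) ^ (p+q) : ℝ) • mpow ((1/2 : ℝ) • (A₁ + A₂)) (-p))]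
    exact Matrix.PosSemidef.zero
  · have hα₁pos : 0 < α₁ := by
      rw [hα₁]
      exact lambdaMin_pos (mpow_posDef (posDef_conj (mpow_posDef hB₁ q) (mpow_posDef hA₁ (p/2))) _)
    have hα₂pos : 0 < α₂ := by
      rw [hα₂]
      exact lambdaMin_pos (mpow_posDef (posDef_conj (mpow_posDef hB₂ q) (mpow_posDef hA₂ (p/2))) _)
    have hσ : 0 < α₁ + α₂ := by linarith
    set β : ℝ := (α₁ + α₂)/2 with hβ
    have hβpos : 0 < β := by positivity
    set w₁ : ℝ := α₁/(α₁ + α₂) with hw₁def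
    set w₂ : ℝ := α₂/(α₁ + α₂) with hw₂def
    have hw₁ : 0 < w₁ := by positivity
    have hw₂ : 0 < w₂ := by positivity
    have hww : w₁ + w₂ = 1 := by rw [hw₁def, hw₂def]; field_simp
    set c₁ : ℝ := β/α₁ with hc₁def
    set c₂ : ℝ := β/α₂ with hc₂def
    have hc₁pos : 0 < c₁ := by positivity
    have hc₂pos : 0 < c₂ := by positivity
    have hwc₁ : w₁ * c₁ = 1/2 := by
      rw [hw₁def, hc₁def, hβ]; field_simp
    have hwc₂ : w₂ * c₂ = 1/2 := by
      rw [hw₂def, hc₂def, hβ]; field_simp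
    have hBid : (1/2 : ℝ) • (B₁ + B₂) = w₁ • (c₁ • B₁) + w₂ • (c₂ • B₂) := by
      rw [smul_smul, smul_smul, hwc₁, hwc₂, smul_add]
    have hAid : (1/2 : ℝ) • (A₁ + A₂) = w₁ • (c₁ • A₁) + w₂ • (c₂ • A₂) := by
      rw [smul_smul, smul_smul, hwc₁, hwc₂, smul_add]
    -- chain 1 : concavity of t^q plus hypotheses
    have hconcB := rpow_concave hq0 hq1 (posDef_rsmul hB₁ hc₁pos) (posDef_rsmul hB₂ hc₂pos)
      hw₁ hw₂ hww
    rw [← hBid, mpow_smul hB₁ hc₁pos q, mpow_smul hB₂ hc₂pos q, smul_smul, smul_smul] at hconcB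
    have h₁' := loewner_smul (show (0:ℝ) ≤ w₁ * c₁^q by positivity) h₁
    have h₂' := loewner_smul (show (0:ℝ) ≤ w₂ * c₂^q by positivity) h₂
    rw [smul_smul] at h₁' h₂'
    have hchain1 := loewner_trans (loewner_add h₁' h₂') hconcB
    -- chain 2 : convexity of t^(-p)
    have hconvA := rpow_neg_convex hp0 hp1 (posDef_rsmul hA₁ hc₁pos) (posDef_rsmul hA₂ hc₂pos)
      hw₁ hw₂ hww
    rw [← hAid, mpow_smul hA₁ hc₁pos (-p), mpow_smul hA₂ hc₂pos (-p), smul_smul, smul_smul]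
      at hconvA
    have hchain2 := loewner_smul (show (0:ℝ) ≤ β^(p+q) by positivity) hconvA
    rw [smul_add (β^(p+q)) ((w₁ * c₁^(-p)) • mpow A₁ (-p)) ((w₂ * c₂^(-p)) • mpow A₂ (-p)),
      smul_smul (β^(p+q)) (w₁ * c₁^(-p)) (mpow A₁ (-p)),
      smul_smul (β^(p+q)) (w₂ * c₂^(-p)) (mpow A₂ (-p))] at hchain2
    -- the coefficients match up
    have hco : ∀ α : ℝ, 0 < α →
        β^(p+q) * (α/(α₁ + α₂) * (β/α)^(-p)) = α/(α₁ + α₂) * (β/α)^q * α^(p+q) := by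
      intro α hα
      have e1 : (β/α)^(-p) = α^p/β^p := by
        rw [Real.rpow_neg (by positivity), Real.div_rpow hβpos.le hα.le, inv_div]
      have e2 : (β/α)^q = β^q/α^q := Real.div_rpow hβpos.le hα.le q
      have e3 : β^(p+q) = β^p * β^q := Real.rpow_add hβpos p q
      have e4 : α^(p+q) = α^p * α^q := Real.rpow_add hα p q
      have hβp : (0:ℝ) < β^p := Real.rpow_pos_of_pos hβpos p
      have hαq : (0:ℝ) < α^q := Real.rpow_pos_of_pos hα q
      rw [e1, e2, e3, e4]
      field_simp
    rw [hw₁def, hw₂def, hc₁def, hc₂def] at hchain2 hchain1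
    rw [hco α₁ hα₁pos, hco α₂ hα₂pos] at hchain2
    exact loewner_trans hchain2 hchain1
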